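/- For integers t ≥ 2, k ≥ 1, and r ≥ 2: ∑_{k_1,…,k_{r-1} ≥ 0, ∑ k_j = k} (multinomial(k; k_1,…,k_{r-1}))^2 / multinomial(kt; k_1 t,…,k_{r-1} t) ≤ (r-1)^k, where multinomial(k; k_1,…,k_{r-1}) = k!/(k_1!⋯k_{r-1}!). -/

import Mathlib

lemma choose_scale_le (a b t : ℕ) (ht : 1 ≤ t) :
    (a + b).choose a ≤ (t * (a + b)).choose (t * a) := by
  induction t with
  | zero => omega
  | succ t ih =>
    rcases Nat.eq_zero_or_pos t with rfl | htpos
    · simp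
    have h := ih htpos
    have hvand : (t * (a + b)).choose (t * a) * ((a + b).choose a)
        ≤ (t * (a + b) + (a + b)).choose (t * a + a) := by
      have heq := Nat.add_choose_eq (t * (a + b)) (a + b) (t * a + a)
      rw [heq]
      exact Finset.single_le_sum (f := fun ij => (t * (a + b)).choose ij.1 * (a + b).choose ij.2)
        (fun i _ => Nat.zero_le _) (a := (t * a, a)) (Finset.HasAntidiagonal.mem_antidiagonal.2 rfl)
    calc (a + b).choose a ≤ (t * (a + b)).choose (t * a) * ((a + b).choose a) :=
          Nat.le_mul_of_pos_left _ (Nat.choose_pos (Nat.mul_le_mul_left t (Nat.le_add_right a b)))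
      _ ≤ (t * (a + b) + (a + b)).choose (t * a + a) := hvand
      _ = ((t + 1) * (a + b)).choose ((t + 1) * a) := by ring_nf

lemma multinomial_le_scale {α : Type*} (s : Finset α) (f : α → ℕ) (t : ℕ) (ht : 1 ≤ t) :
    Nat.multinomial s f ≤ Nat.multinomial s (fun i => f i * t) := by
  induction s using Finset.cons_induction with
  | empty => simp
  | cons a s ha ih =>
    rw [Nat.multinomial_cons, Nat.multinomial_cons]
    refine Nat.mul_le_mul ?_ ih
    have : f a * t + ∑ i ∈ s, f i * t = t * (f a + ∑ i ∈ s, f i) := by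
      rw [mul_add, Finset.mul_sum]
      simp [mul_comm]
    calc (f a + ∑ i ∈ s, f i).choose (f a)
        ≤ (t * (f a + ∑ i ∈ s, f i)).choose (t * f a) := choose_scale_le _ _ t ht
      _ = (f a * t + ∑ i ∈ s, f i * t).choose (f a * t) := by
          rw [this, Nat.mul_comm (f a) t]

/-- `∑_{k_1+⋯+k_{r-1} = k} multinomial(k; k⃗)² / multinomial(kt; t·k⃗) ≤ (r-1)^k`. -/
theorem sum_multinomial_ratio_le (r t k : ℕ) (hr : 2 ≤ r) (ht : 2 ≤ t) (hk : 1 ≤ k) :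
    ∑ kv ∈ (Fintype.piFinset fun _ : Fin (r - 1) => Finset.range (k + 1)).filter
        (fun kv => ∑ j, kv j = k),
      (Nat.multinomial Finset.univ kv : ℝ) ^ 2 /
        (Nat.multinomial Finset.univ (fun j => kv j * t) : ℝ)
      ≤ ((r : ℝ) - 1) ^ k := by
  have hset : (Fintype.piFinset fun _ : Fin (r - 1) => Finset.range (k + 1)).filter
      (fun kv => ∑ j, kv j = k) = Finset.piAntidiag Finset.univ k := by
    ext f
    simp only [Finset.mem_filter, Fintype.mem_piFinset, Finset.mem_range,
      Finset.mem_piAntidiag, Finset.mem_univ, implies_true, and_true]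
    constructor
    · rintro ⟨-, h⟩; exact h
    · rintro h
      refine ⟨fun i => ?_, h⟩
      have h2 : f i ≤ ∑ j, f j := Finset.single_le_sum (fun j _ => Nat.zero_le _) (Finset.mem_univ i)
      rw [← h]
      exact Nat.lt_succ_of_le h2
  rw [hset]
  have hsum : ∑ kv ∈ Finset.piAntidiag (Finset.univ : Finset (Fin (r-1))) k,
      (Nat.multinomial Finset.univ kv : ℝ) = ((r : ℝ) - 1) ^ k := by
    have := Finset.sum_pow_eq_sum_piAntidiag (Finset.univ : Finset (Fin (r-1)))
      (fun _ => (1 : ℝ)) k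
    simp only [one_pow, Finset.prod_const_one, mul_one, Finset.sum_const,
      Finset.card_univ, Fintype.card_fin, nsmul_eq_mul] at this
    rw [← this]
    have : ((r - 1 : ℕ) : ℝ) = (r : ℝ) - 1 := by
      push_cast [Nat.cast_sub (by omega : 1 ≤ r)]; ring
    rw [this]
  rw [← hsum]
  refine Finset.sum_le_sum fun kv _ => ?_
  have hN : 0 < Nat.multinomial (Finset.univ : Finset (Fin (r-1))) kv := Nat.multinomial_pos _ _
  have hM : 0 < Nat.multinomial (Finset.univ : Finset (Fin (r-1))) (fun j => kv j * t) :=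
    Nat.multinomial_pos _ _
  have hle : Nat.multinomial (Finset.univ : Finset (Fin (r-1))) kv
      ≤ Nat.multinomial Finset.univ (fun j => kv j * t) :=
    multinomial_le_scale _ _ t (by omega)
  rw [div_le_iff₀ (by exact_mod_cast hM)]
  have := Nat.mul_le_mul_left (Nat.multinomial (Finset.univ : Finset (Fin (r-1))) kv) hle
  calc (Nat.multinomial Finset.univ kv : ℝ) ^ 2
      = (Nat.multinomial Finset.univ kv : ℝ) * Nat.multinomial Finset.univ kv := sq _
    _ ≤ (Nat.multinomial Finset.univ kv : ℝ) * Nat.multinomial Finset.univ (fun j => kv j * t) := by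
        exact_mod_cast this
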